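/- Let q be a nondegenerate symmetric bilinear form of signature (1, k), k ≥ 2, on a rational vector space N, and let L ∈ N be a nonzero vector with q(L, L) = 0. Then the set of vectors L′ ∈ N with q(L′, L′) < 0 and such that the span of L and L′ has rank 2 and q restricted to span(L, L′) is degenerate or nondegenerate of signature (0,1) or (1,1), is nonempty; moreover the collection of q-orthogonal complements ⟨L, L′⟩^⊥ over all such L′ with q(L′,L′)<0 has dense union of the corresponding real subspaces in L^⊥ ⊗ ℝ. -/

import Mathlib

open Matrix

variable {d : ℕ}

/-- The rational bilinear form on `ℚ^d` with Gram matrix `Q`. -/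
def qQ (Q : Matrix (Fin d) (Fin d) ℚ) (x y : Fin d → ℚ) : ℚ :=
  x ⬝ᵥ Q.mulVec y

/-- The real bilinear form extending `qQ`. -/
def qR (Q : Matrix (Fin d) (Fin d) ℚ) (x y : Fin d → ℝ) : ℝ :=
  x ⬝ᵥ (Q.map (Rat.cast : ℚ → ℝ)).mulVec y

/-- The real vector associated to a rational vector. -/
def ratVec (v : Fin d → ℚ) : Fin d → ℝ := fun i => (v i : ℝ)

/-! ### Auxiliary lemmas -/

lemma qR_cast (Q : Matrix (Fin d) (Fin d) ℚ) (a b : Fin d → ℚ) :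
    qR Q (ratVec a) (ratVec b) = (qQ Q a b : ℝ) := by
  simp [qR, qQ, ratVec, dotProduct, Matrix.mulVec, Matrix.map_apply]

lemma ratVec_eq_zero {v : Fin d → ℚ} (h : ratVec v = 0) : v = 0 := by
  funext i
  have := congrFun h i
  simpa [ratVec] using this

lemma cont_qR_right (Q : Matrix (Fin d) (Fin d) ℚ) (x : Fin d → ℝ) :
    Continuous fun z => qR Q x z := by
  simp only [qR, dotProduct, Matrix.mulVec]
  exact continuous_finset_sum _ fun i _ => continuous_const.mul
    (continuous_finset_sum _ fun j _ => continuous_const.mul (continuous_apply j))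

lemma cont_qR_diag (Q : Matrix (Fin d) (Fin d) ℚ) :
    Continuous fun z : Fin d → ℝ => qR Q z z := by
  simp only [qR, dotProduct, Matrix.mulVec]
  exact continuous_finset_sum _ fun i _ => (continuous_apply i).mul
    (continuous_finset_sum _ fun j _ => continuous_const.mul (continuous_apply j))

lemma ratVec_dense : DenseRange (ratVec (d := d)) := by
  rw [Metric.denseRange_iff]
  intro z ε hε
  have : ∀ i : Fin d, ∃ q : ℚ, |z i - (q : ℝ)| < ε := fun i => exists_rat_near (z i) hε
  choose w hw using this
  refine ⟨w, ?_⟩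
  rw [dist_pi_lt_iff hε]
  intro i
  rw [Real.dist_eq]
  exact hw i

lemma exists_rat_mem_open {O : Set (Fin d → ℝ)} (hO : IsOpen O) (hne : O.Nonempty) :
    ∃ w : Fin d → ℚ, ratVec w ∈ O := by
  exact ratVec_dense.exists_mem_open hO hne

lemma qR_nondeg (Q : Matrix (Fin d) (Fin d) ℚ) (hdet : Q.det ≠ 0)
    (z : Fin d → ℝ) (hz : ∀ w, qR Q z w = 0) : z = 0 := by
  set M := Q.map (Rat.cast : ℚ → ℝ) with hM
  have hdetM : M.det ≠ 0 := by
    have : M.det = ((Q.det : ℚ) : ℝ) := (RingHom.map_det (Rat.castHom ℝ) Q).symm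
    rw [this]
    exact_mod_cast hdet
  have hv : z ᵥ* M = 0 := by
    funext j
    have := hz (Pi.single j 1)
    simpa [hM, Matrix.map_apply, qR, Matrix.mulVec_single, Matrix.vecMul, dotProduct, Pi.single_apply,
      Finset.sum_ite_eq', mul_comm] using this
  have h2 : z ᵥ* (M * M⁻¹) = 0 := by
    rw [← Matrix.vecMul_vecMul, hv, Matrix.zero_vecMul]
  rwa [Matrix.mul_nonsing_inv M (isUnit_iff_ne_zero.mpr hdetM), Matrix.vecMul_one] at h2

lemma indep_pair (Q : Matrix (Fin d) (Fin d) ℚ) {L L' : Fin d → ℚ}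
    (hL : L ≠ 0) (hLiso : qQ Q L L = 0) (h' : qQ Q L' L' ≠ 0) :
    LinearIndependent ℚ ![L, L'] := by
  rw [linearIndependent_fin2]
  constructor
  · intro h0
    apply h'
    rw [show L' = 0 from by simpa using h0]
    simp [qQ]
  · intro a ha
    simp only [Matrix.cons_val_one, Matrix.head_cons, Matrix.cons_val_zero] at ha
    have h1 : qQ Q (a • L') (a • L') = 0 := by rw [ha]; exact hLiso
    have h2 : qQ Q (a • L') (a • L') = a ^ 2 * qQ Q L' L' := by
      simp [qQ, Matrix.mulVec_smul, smul_dotProduct, dotProduct_smul, smul_eq_mul]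
      ring
    rw [h2] at h1
    have ha0 : a = 0 := by
      rcases mul_eq_zero.mp h1 with h | h
      · exact pow_eq_zero_iff (by norm_num) |>.mp h
      · exact absurd h h'
    rw [ha0, zero_smul] at ha
    exact hL ha.symm

lemma exists_neg_orth (k : ℕ) (hk : 2 ≤ k) (hd : d = k + 1)
    (Q : Matrix (Fin d) (Fin d) ℚ)
    (Wm : Submodule ℝ (Fin d → ℝ)) (hWm : Module.finrank ℝ Wm = k)
    (hneg : ∀ x ∈ Wm, x ≠ 0 → qR Q x x < 0) (x : Fin d → ℝ) :
    ∃ v, qR Q x v = 0 ∧ qR Q v v < 0 := by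
  classical
  let φ : (Fin d → ℝ) →ₗ[ℝ] ℝ :=
    { toFun := fun z => qR Q x z
      map_add' := fun a b => by simp [qR, Matrix.mulVec_add, dotProduct_add]
      map_smul' := fun c a => by simp [qR, Matrix.mulVec_smul, dotProduct_smul] }
  have hker : k ≤ Module.finrank ℝ (LinearMap.ker φ) := by
    have h1 := LinearMap.finrank_range_add_finrank_ker φ
    have h2 : Module.finrank ℝ (LinearMap.range φ) ≤ 1 := by
      simpa using Submodule.finrank_le (LinearMap.range φ)
    have h3 : Module.finrank ℝ (Fin d → ℝ) = d := Module.finrank_fin_fun ℝ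
    omega
  have hdim : 0 < Module.finrank ℝ ↥(Wm ⊓ LinearMap.ker φ) := by
    have h4 := Submodule.finrank_sup_add_finrank_inf_eq Wm (LinearMap.ker φ)
    have h5 : Module.finrank ℝ ↥(Wm ⊔ LinearMap.ker φ) ≤ d := by
      have := Submodule.finrank_le (Wm ⊔ LinearMap.ker φ)
      rwa [Module.finrank_fin_fun] at this
    omega
  have hne : Wm ⊓ LinearMap.ker φ ≠ ⊥ := by
    intro hbot
    rw [hbot, finrank_bot] at hdim
    exact lt_irrefl 0 hdim
  obtain ⟨v, hv, hv0⟩ := Submodule.exists_mem_ne_zero_of_ne_bot hne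
  exact ⟨v, hv.2, hneg v hv.1 hv0⟩

lemma qR_sub_smul_left (Q : Matrix (Fin d) (Fin d) ℚ) (a b w : Fin d → ℝ) (t : ℝ) :
    qR Q (a - t • b) w = qR Q a w - t * qR Q b w := by
  simp [qR, sub_dotProduct, smul_dotProduct, smul_eq_mul]

lemma qR_smul_left (Q : Matrix (Fin d) (Fin d) ℚ) (a b : Fin d → ℝ) (t : ℝ) :
    qR Q (t • a) b = t * qR Q a b := by
  simp [qR, smul_dotProduct, smul_eq_mul]

lemma qR_add_smul_right (Q : Matrix (Fin d) (Fin d) ℚ) (a b w : Fin d → ℝ) (t : ℝ) :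
    qR Q a (b + t • w) = qR Q a b + t * qR Q a w := by
  simp [qR, Matrix.mulVec_add, Matrix.mulVec_smul, dotProduct_add, dotProduct_smul,
    smul_eq_mul]

lemma qR_sub_smul_right (Q : Matrix (Fin d) (Fin d) ℚ) (a b w : Fin d → ℝ) (t : ℝ) :
    qR Q a (b - t • w) = qR Q a b - t * qR Q a w := by
  simp [qR, Matrix.mulVec_sub, Matrix.mulVec_smul, dotProduct_sub, dotProduct_smul,
    smul_eq_mul]

lemma qQ_sub_smul_right (Q : Matrix (Fin d) (Fin d) ℚ) (a b w : Fin d → ℚ) (t : ℚ) :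
    qQ Q a (b - t • w) = qQ Q a b - t * qQ Q a w := by
  simp [qQ, Matrix.mulVec_sub, Matrix.mulVec_smul, dotProduct_sub, dotProduct_smul,
    smul_eq_mul]

/-- Let `q` be a nondegenerate symmetric bilinear form of signature
`(1, k)`, `k ≥ 2`, on a rational vector space `N`, and let `L ≠ 0` be isotropic.
Then there exists `L'` with `q(L',L') < 0` such that `span(L, L')` has rank 2 (and
the restriction of `q` to it is degenerate or of signature `(0,1)` or `(1,1)`,
i.e. its Gram determinant is `≤ 0`); moreover, the union of the real subspaces
`⟨L, L'⟩^⊥ ⊗ ℝ` over all such negative vectors `L'` is dense in `L^⊥ ⊗ ℝ`. -/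
theorem negative_vectors_with_dense_orthogonal_complements
    (k : ℕ) (hk : 2 ≤ k) (hd : d = k + 1)
    (Q : Matrix (Fin d) (Fin d) ℚ) (hQ : Q.IsSymm) (hdet : Q.det ≠ 0)
    (Wp Wm : Submodule ℝ (Fin d → ℝ))
    (hWp : Module.finrank ℝ Wp = 1) (hWm : Module.finrank ℝ Wm = k)
    (hspan : Wp ⊔ Wm = ⊤)
    (hpos : ∀ x ∈ Wp, x ≠ 0 → 0 < qR Q x x)
    (hneg : ∀ x ∈ Wm, x ≠ 0 → qR Q x x < 0)
    (L : Fin d → ℚ) (hL : L ≠ 0) (hLiso : qQ Q L L = 0) :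
    (∃ L' : Fin d → ℚ, qQ Q L' L' < 0 ∧ LinearIndependent ℚ ![L, L'] ∧
      qQ Q L L * qQ Q L' L' - qQ Q L L' ^ 2 ≤ 0) ∧
    ∀ x : Fin d → ℝ, qR Q x (ratVec L) = 0 →
      x ∈ closure {y : Fin d → ℝ | qR Q y (ratVec L) = 0 ∧
        ∃ L' : Fin d → ℚ, qQ Q L' L' < 0 ∧ LinearIndependent ℚ ![L, L'] ∧
          qR Q y (ratVec L') = 0} := by
  classical
  have hLLR : qR Q (ratVec L) (ratVec L) = 0 := by
    rw [qR_cast, hLiso]; norm_num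
  constructor
  · -- existence of a negative vector independent from L
    have hWmne : Wm ≠ ⊥ := by
      intro h; rw [h, finrank_bot] at hWm; omega
    obtain ⟨w₀, hw₀m, hw₀ne⟩ := Submodule.exists_mem_ne_zero_of_ne_bot hWmne
    have hOopen : IsOpen {z : Fin d → ℝ | qR Q z z < 0} :=
      isOpen_lt (cont_qR_diag Q) continuous_const
    obtain ⟨L₀, hL₀⟩ := exists_rat_mem_open hOopen ⟨w₀, hneg w₀ hw₀m hw₀ne⟩
    have hL₀neg : qQ Q L₀ L₀ < 0 := by
      have := hL₀; rw [Set.mem_setOf_eq, qR_cast] at this; exact_mod_cast this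
    exact ⟨L₀, hL₀neg, indep_pair Q hL hLiso (ne_of_lt hL₀neg),
      by rw [hLiso, zero_mul, zero_sub, neg_nonpos]; positivity⟩
  · intro x hx
    by_cases h : ∃ v, qR Q x v = 0 ∧ qR Q v v < 0 ∧ qR Q (ratVec L) v ≠ 0
    · -- main case
      rw [Metric.mem_closure_iff]
      intro ε hε
      obtain ⟨v, hv1, hv2, hv3⟩ := h
      set b : ℝ := qR Q (ratVec L) v with hbdef
      have hbpos : 0 < |b| := abs_pos.mpr hv3
      set nL : ℝ := ‖ratVec L‖ with hnLdef
      have hnL : 0 ≤ nL := norm_nonneg _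
      set δ : ℝ := ε * |b| / (2 * (nL + 1)) with hδdef
      have hδ : 0 < δ := by positivity
      have hOopen : IsOpen ({z : Fin d → ℝ | qR Q z z < 0} ∩
          {z | |b| / 2 < |qR Q (ratVec L) z|} ∩ {z | |qR Q x z| < δ}) :=
        (((isOpen_lt (cont_qR_diag Q) continuous_const).inter
          (isOpen_lt continuous_const (cont_qR_right Q (ratVec L)).abs)).inter
          (isOpen_lt (cont_qR_right Q x).abs continuous_const))
      have hvmem : v ∈ ({z : Fin d → ℝ | qR Q z z < 0} ∩
          {z | |b| / 2 < |qR Q (ratVec L) z|} ∩ {z | |qR Q x z| < δ}) := by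
        refine ⟨⟨hv2, ?_⟩, ?_⟩
        · simpa [← hbdef] using half_lt_self hbpos
        · simpa [hv1] using hδ
      obtain ⟨L', hL'⟩ := exists_rat_mem_open hOopen ⟨v, hvmem⟩
      obtain ⟨⟨hL'neg, hL'b⟩, hL'x⟩ := hL'
      simp only [Set.mem_setOf_eq] at hL'neg hL'b hL'x
      set β : ℝ := qR Q (ratVec L) (ratVec L') with hβdef
      have hβ : β ≠ 0 := by
        intro h0
        rw [h0, abs_zero] at hL'b
        linarith
      set c : ℝ := qR Q x (ratVec L') / β with hcdef
      have hcβ : c * β = qR Q x (ratVec L') := div_mul_cancel₀ _ hβ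
      have hL'negQ : qQ Q L' L' < 0 := by
        rw [qR_cast] at hL'neg; exact_mod_cast hL'neg
      refine ⟨x - c • ratVec L, ⟨?_, L', hL'negQ,
        indep_pair Q hL hLiso (ne_of_lt hL'negQ), ?_⟩, ?_⟩
      · rw [qR_sub_smul_left, hx, hLLR]; ring
      · rw [qR_sub_smul_left, hcβ]; ring

      · rw [dist_eq_norm, sub_sub_cancel, norm_smul, Real.norm_eq_abs, ← hnLdef]
        have h1 : |c| * |β| = |qR Q x (ratVec L')| := by rw [← abs_mul, hcβ]
        have h2 : |c| * (|b| / 2) ≤ |c| * |β| :=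
          mul_le_mul_of_nonneg_left hL'b.le (abs_nonneg c)
        have h3 : |c| * |β| < δ := by rw [h1]; exact hL'x
        have h4 : |c| * |β| * (2 * (nL + 1)) < ε * |b| := by
          rw [hδdef] at h3
          exact (lt_div_iff₀ (by positivity)).mp h3
        have h5 : (0:ℝ) ≤ |c| := abs_nonneg c
        nlinarith [mul_le_mul_of_nonneg_right h2 (by positivity : (0:ℝ) ≤ 2 * (nL + 1))]
    · -- exceptional case : x is a real multiple of L
      push_neg at h
      have hker : ∀ w, qR Q x w = 0 → qR Q (ratVec L) w = 0 := by
        intro w hw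
        obtain ⟨v₀, hv₀x, hv₀neg⟩ := exists_neg_orth k hk hd Q Wm hWm hneg x
        have hLv₀ : qR Q (ratVec L) v₀ = 0 := h v₀ hv₀x hv₀neg
        have hexp : ∀ s : ℝ, qR Q (v₀ + s • w) (v₀ + s • w) =
            qR Q v₀ v₀ + s * (qR Q v₀ w + qR Q w v₀) + s ^ 2 * qR Q w w := by
          intro s
          simp [qR, Matrix.mulVec_add, Matrix.mulVec_smul, dotProduct_add,
            add_dotProduct, dotProduct_smul, smul_dotProduct, smul_eq_mul]
          ring
        have hcont : Continuous fun s : ℝ => qR Q v₀ v₀ +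
            s * (qR Q v₀ w + qR Q w v₀) + s ^ 2 * qR Q w w :=
          (continuous_const.add (continuous_id.mul continuous_const)).add
            ((continuous_pow 2).mul continuous_const)
        have hmem : {s : ℝ | qR Q v₀ v₀ + s * (qR Q v₀ w + qR Q w v₀) +
            s ^ 2 * qR Q w w < 0} ∈ nhds (0:ℝ) :=
          (isOpen_lt hcont continuous_const).mem_nhds (by simpa using hv₀neg)
        have hmem' : {s : ℝ | qR Q v₀ v₀ + s * (qR Q v₀ w + qR Q w v₀) +
            s ^ 2 * qR Q w w < 0} ∈ nhdsWithin (0:ℝ) {(0:ℝ)}ᶜ := nhdsWithin_le_nhds hmem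
        obtain ⟨s, hs1, hs2⟩ := ((Filter.eventually_mem_set.mpr hmem').and
          (Filter.eventually_mem_set.mpr self_mem_nhdsWithin)).exists
        have hsne : s ≠ 0 := hs2
        have hx_s : qR Q x (v₀ + s • w) = 0 := by
          rw [qR_add_smul_right, hv₀x, hw]; ring
        have hneg_s : qR Q (v₀ + s • w) (v₀ + s • w) < 0 := by rw [hexp]; exact hs1
        have h2 := h (v₀ + s • w) hx_s hneg_s
        rw [qR_add_smul_right, hLv₀, zero_add] at h2
        rcases mul_eq_zero.mp h2 with h3 | h3
        · exact absurd h3 hsne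
        · exact h3
      by_cases hxall : ∀ u, qR Q x u = 0
      · exact absurd (ratVec_eq_zero (qR_nondeg Q hdet _ fun w => hker w (hxall w))) hL
      · push_neg at hxall
        obtain ⟨u, hu⟩ := hxall
        set c : ℝ := qR Q (ratVec L) u / qR Q x u with hcdef
        have hLc : ∀ w, qR Q (ratVec L - c • x) w = 0 := by
          intro w
          have hw0 : qR Q x (w - (qR Q x w / qR Q x u) • u) = 0 := by
            rw [qR_sub_smul_right, div_mul_cancel₀ _ hu, sub_self]
          have h3 := hker _ hw0
          rw [qR_sub_smul_right] at h3
          rw [qR_sub_smul_left, hcdef]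
          field_simp at h3 ⊢
          linarith
        have hLx : ratVec L = c • x := by
          have := qR_nondeg Q hdet _ hLc
          rwa [sub_eq_zero] at this
        have hc : c ≠ 0 := by
          intro h0; rw [h0, zero_smul] at hLx; exact hL (ratVec_eq_zero hLx)
        have hxL : x = c⁻¹ • ratVec L := by
          rw [hLx, smul_smul, inv_mul_cancel₀ hc, one_smul]
        -- construct a rational negative vector orthogonal to L
        obtain ⟨v₁, hv₁L, hv₁neg⟩ := exists_neg_orth k hk hd Q Wm hWm hneg (ratVec L)
        have hu' : ∃ u' : Fin d → ℚ, qQ Q L u' ≠ 0 := by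
          have hopen : IsOpen {z : Fin d → ℝ | qR Q (ratVec L) z ≠ 0} :=
            IsOpen.preimage (cont_qR_right Q (ratVec L)) isOpen_compl_singleton
          have hne : {z : Fin d → ℝ | qR Q (ratVec L) z ≠ 0}.Nonempty := by
            by_contra hc2
            have hall : ∀ w, qR Q (ratVec L) w = 0 := fun w => by
              by_contra hw
              exact hc2 ⟨w, hw⟩
            exact hL (ratVec_eq_zero (qR_nondeg Q hdet _ hall))
          obtain ⟨u', hu'⟩ := exists_rat_mem_open hopen hne
          refine ⟨u', fun h0 => hu' ?_⟩
          rw [qR_cast, h0]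
          norm_num
        obtain ⟨u', hμ⟩ := hu'
        have hμR : ((qQ Q L u' : ℚ) : ℝ) ≠ 0 := by exact_mod_cast hμ
        set f : (Fin d → ℝ) → (Fin d → ℝ) :=
          fun z => z - (qR Q (ratVec L) z / ((qQ Q L u' : ℚ) : ℝ)) • ratVec u' with hfdef
        have hf_cont : Continuous f :=
          continuous_id.sub (((cont_qR_right Q (ratVec L)).div_const _).smul continuous_const)
        have hopen : IsOpen {z : Fin d → ℝ | qR Q (f z) (f z) < 0} :=
          isOpen_lt ((cont_qR_diag Q).comp hf_cont) continuous_const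
        have hfv₁ : f v₁ = v₁ := by
          rw [hfdef]; simp [hv₁L]
        have hv₁mem : v₁ ∈ {z : Fin d → ℝ | qR Q (f z) (f z) < 0} := by
          rw [Set.mem_setOf_eq, hfv₁]; exact hv₁neg
        obtain ⟨w, hw⟩ := exists_rat_mem_open hopen ⟨v₁, hv₁mem⟩
        set L' : Fin d → ℚ := w - (qQ Q L w / qQ Q L u') • u' with hL'def
        have hcast : ratVec L' = f (ratVec w) := by
          funext i
          rw [hfdef]
          simp only [hL'def, ratVec, Pi.sub_apply, Pi.smul_apply, smul_eq_mul, qR_cast]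
          push_cast
          ring
        have hL'neg : qQ Q L' L' < 0 := by
          rw [Set.mem_setOf_eq, ← hcast, qR_cast] at hw
          exact_mod_cast hw
        have hLL' : qQ Q L L' = 0 := by
          rw [hL'def, qQ_sub_smul_right, div_mul_cancel₀ _ hμ, sub_self]
        refine subset_closure ⟨hx, L', hL'neg,
          indep_pair Q hL hLiso (ne_of_lt hL'neg), ?_⟩
        rw [hxL, qR_smul_left, qR_cast, hLL']
        norm_num
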